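/- For every integer n ≥ 1, the determinant of the n×n matrix with (i,j) entry B_{i+j}/(i+j)! (indices 1 ≤ i,j ≤ n) equals (−1)^{n(n−1)/2}·(2n+1)!! / (2^{n(n+1)} · (∏_{m=1}^{n} (2m+1)!!)^2 ). -/

import Mathlib

section Aux
open Finset Polynomial Matrix Nat

noncomputable def JJ : ℚ[X] →ₗ[ℚ] ℚ :=
  Polynomial.lsum (fun k => ((k + 1 : ℚ))⁻¹ • LinearMap.id)

lemma JJ_monomial (k : ℕ) (a : ℚ) : JJ (monomial k a) = a / (k + 1) := by
  simp [JJ, Polynomial.sum_monomial_index, div_eq_inv_mul]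

lemma JJ_X_pow (k : ℕ) : JJ (X ^ k) = 1 / (k + 1) := by
  rw [← monomial_one_right_eq_X_pow]; exact JJ_monomial k 1

lemma JJ_deriv (p : ℚ[X]) : JJ (derivative p) = p.eval 1 - p.eval 0 := by
  induction p using Polynomial.induction_on' with
  | add p q hp hq => simp [hp, hq]; ring
  | monomial k a =>
    cases k with
    | zero => simp
    | succ m =>
      rw [derivative_monomial, JJ_monomial]
      simp only [Nat.add_sub_cancel, eval_monomial]
      push_cast
      rw [zero_pow (Nat.succ_ne_zero m), one_pow]
      field_simp
      ring

lemma JJ_parts (p q : ℚ[X]) :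
    JJ (derivative p * q) = (p * q).eval 1 - (p * q).eval 0 - JJ (p * derivative q) := by
  have h := JJ_deriv (p * q)
  rw [derivative_mul, _root_.map_add] at h
  linarith

lemma eval_one_bernoulli {k : ℕ} (hk : k ≠ 1) :
    (Polynomial.bernoulli k).eval 1 = _root_.bernoulli k := by
  rw [Polynomial.bernoulli_eval_one, bernoulli_eq_bernoulli'_of_ne_one hk]

lemma C_add_one (j : ℕ) : (C ((j:ℚ)+1)) = ((j:ℚ[X]) + 1) := by
  rw [_root_.map_add, _root_.map_natCast, _root_.map_one]

lemma bern_eq_deriv (i : ℕ) :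
    Polynomial.bernoulli i = C (((i : ℚ) + 1))⁻¹ * derivative (Polynomial.bernoulli (i + 1)) := by
  rw [Polynomial.derivative_bernoulli_add_one, ← mul_assoc, ← C_add_one, ← C_mul,
    inv_mul_cancel₀ (by positivity), C_1, one_mul]

lemma JJ_bernoulli {k : ℕ} (hk : 1 ≤ k) : JJ (Polynomial.bernoulli k) = 0 := by
  rw [bern_eq_deriv k, ← smul_eq_C_mul, _root_.map_smul, JJ_deriv,
    eval_one_bernoulli (by omega), Polynomial.bernoulli_eval_zero]
  simp

lemma gram (j : ℕ) (hj : 1 ≤ j) : ∀ i : ℕ, 1 ≤ i →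
    JJ (Polynomial.bernoulli i * Polynomial.bernoulli j)
      = (-1) ^ (j - 1) * i.factorial * j.factorial / (i + j).factorial
          * _root_.bernoulli (i + j) := by
  induction j, hj using Nat.le_induction with
  | base =>
    intro i hi
    rw [bern_eq_deriv i, ← smul_eq_C_mul, smul_mul_assoc, _root_.map_smul, JJ_parts]
    have hd1 : derivative (Polynomial.bernoulli 1) = 1 := by
      rw [Polynomial.derivative_bernoulli_add_one]; simp
    rw [hd1, mul_one, JJ_bernoulli (by omega)]
    have he1 : (Polynomial.bernoulli 1).eval 1 = 1/2 := by
      rw [Polynomial.bernoulli_eval_one]; norm_num [bernoulli'_one]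
    have he0 : (Polynomial.bernoulli 1).eval 0 = -(1/2) := by
      rw [Polynomial.bernoulli_eval_zero]; norm_num [_root_.bernoulli_one]
    rw [eval_mul, eval_mul, he1, he0, eval_one_bernoulli (by omega : i + 1 ≠ 1),
      Polynomial.bernoulli_eval_zero]
    have hfac : ((i+1).factorial : ℚ) = (i+1) * i.factorial := by
      rw [Nat.factorial_succ]; push_cast; ring
    have h0 : ((i:ℚ)+1) ≠ 0 := by positivity
    have h1 : (i.factorial : ℚ) ≠ 0 := by exact_mod_cast i.factorial_ne_zero
    rw [smul_eq_mul, hfac]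
    norm_num
    field_simp
    ring
  | succ j hj ih =>
    intro i hi
    rw [bern_eq_deriv i, ← smul_eq_C_mul, smul_mul_assoc, _root_.map_smul, JJ_parts]
    rw [Polynomial.derivative_bernoulli_add_one]
    rw [show Polynomial.bernoulli (i+1) * (((j:ℚ[X]) + 1) * Polynomial.bernoulli j)
        = ((j:ℚ)+1) • (Polynomial.bernoulli (i+1) * Polynomial.bernoulli j) by
      rw [smul_eq_C_mul, C_add_one]; ring]
    rw [_root_.map_smul, ih (i+1) (by omega)]
    rw [eval_mul, eval_mul, eval_one_bernoulli (by omega : i + 1 ≠ 1),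
      eval_one_bernoulli (by omega : j + 1 ≠ 1),
      Polynomial.bernoulli_eval_zero, Polynomial.bernoulli_eval_zero]
    have e1 : i + 1 + j = i + (j + 1) := by ring
    have e2 : j + 1 - 1 = j := rfl
    have e3 : j - 1 + 1 = j := by omega
    rw [e1, e2]
    have hfs : ∀ m : ℕ, ((m+1).factorial : ℚ) = (m+1) * m.factorial := by
      intro m; rw [Nat.factorial_succ]; push_cast; ring
    have h0 : ((i:ℚ)+1) ≠ 0 := by positivity
    have h1 : ((j:ℚ)+1) ≠ 0 := by positivity
    have h2 : (i.factorial : ℚ) ≠ 0 := by exact_mod_cast i.factorial_ne_zero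
    have h3 : (j.factorial : ℚ) ≠ 0 := by exact_mod_cast j.factorial_ne_zero
    have h4 : ((i+(j+1)).factorial : ℚ) ≠ 0 := by exact_mod_cast (i+(j+1)).factorial_ne_zero
    have hsgn : ((-1:ℚ))^j = -(-1:ℚ)^(j-1) := by
      conv_lhs => rw [← e3]
      rw [pow_succ]; ring
    rw [smul_eq_mul, smul_eq_mul, hfs i, hfs j, hsgn]
    field_simp
    ring



noncomputable def ff (k : ℕ) : ℚ[X] := X ^ k * (X - 1) ^ k
noncomputable def QQ (k : ℕ) : ℚ[X] := derivative^[k] (ff k)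

lemma ff_monic (k : ℕ) : (ff k).Monic :=
  (monic_X_pow k).mul ((monic_X_sub_C 1).pow k)

lemma ff_natDegree (k : ℕ) : (ff k).natDegree = 2 * k := by
  rw [ff, show (X - 1 : ℚ[X]) = X - C 1 by rw [C_1], (monic_X_pow k).natDegree_mul ((monic_X_sub_C 1).pow k), natDegree_X_pow,
    natDegree_pow, natDegree_X_sub_C]
  ring

lemma iter_deriv_ff_factor {k : ℕ} : ∀ r, r ≤ k → ∃ g : ℚ[X],
    derivative^[r] (ff k) = X ^ (k - r) * (X - 1) ^ (k - r) * g := by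
  intro r
  induction r with
  | zero => intro _; exact ⟨1, by simp [ff]⟩
  | succ r ih =>
    intro hr
    obtain ⟨g, hg⟩ := ih (by omega)
    have ha : k - r = (k - (r + 1)) + 1 := by omega
    refine ⟨((k - r : ℕ) : ℚ[X]) * (X - 1) * g + ((k - r : ℕ) : ℚ[X]) * X * g
      + X * (X - 1) * derivative g, ?_⟩
    rw [Function.iterate_succ_apply', hg, ha]
    have hd : derivative (X ^ (k - (r+1) + 1) * (X - 1) ^ (k - (r+1) + 1) * g)
        = derivative (X ^ (k - (r+1) + 1) * (X - 1) ^ (k - (r+1) + 1)) * g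
          + X ^ (k - (r+1) + 1) * (X - 1) ^ (k - (r+1) + 1) * derivative g := by
      rw [derivative_mul]
    rw [hd, derivative_mul, derivative_X_pow]
    have hd2 : derivative ((X - 1 : ℚ[X]) ^ (k - (r+1) + 1))
        = ((k - (r+1) + 1 : ℕ) : ℚ[X]) * (X - 1) ^ (k - (r+1)) := by
      rw [derivative_pow]
      simp
    rw [hd2]
    push_cast [ha]
    simp only [_root_.map_add, _root_.map_one, _root_.map_natCast]
    ring

lemma iter_deriv_ff_eval0 {k r : ℕ} (hr : r < k) :
    (derivative^[r] (ff k)).eval 0 = 0 := by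
  obtain ⟨g, hg⟩ := iter_deriv_ff_factor r (le_of_lt hr)
  rw [hg]
  simp [zero_pow (by omega : k - r ≠ 0)]

lemma iter_deriv_ff_eval1 {k r : ℕ} (hr : r < k) :
    (derivative^[r] (ff k)).eval 1 = 0 := by
  obtain ⟨g, hg⟩ := iter_deriv_ff_factor r (le_of_lt hr)
  rw [hg]
  simp [zero_pow (by omega : k - r ≠ 0)]

lemma JJ_iter_parts : ∀ (s : ℕ) (p q : ℚ[X]),
    (∀ r < s, (derivative^[r] p).eval 0 = 0) →
    (∀ r < s, (derivative^[r] p).eval 1 = 0) →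
    JJ (derivative^[s] p * q) = (-1) ^ s * JJ (p * derivative^[s] q) := by
  intro s
  induction s with
  | zero => intro p q _ _; simp
  | succ s ih =>
    intro p q h0 h1
    rw [Function.iterate_succ_apply]
    rw [ih (derivative p) q
      (fun r hr => by rw [← Function.iterate_succ_apply]; exact h0 (r+1) (by omega))
      (fun r hr => by rw [← Function.iterate_succ_apply]; exact h1 (r+1) (by omega))]
    rw [JJ_parts p (derivative^[s] q)]
    have e1 : (p * derivative^[s] q).eval 1 = 0 := by
      have := h1 0 (by omega); simp only [Function.iterate_zero_apply] at this
      rw [eval_mul, this]; simp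
    have e0 : (p * derivative^[s] q).eval 0 = 0 := by
      have := h0 0 (by omega); simp only [Function.iterate_zero_apply] at this
      rw [eval_mul, this]; simp
    rw [e1, e0, ← Function.iterate_succ_apply' derivative s q]
    ring

lemma JJ_X_pow_mul (b : ℕ) : ∀ a : ℕ,
    JJ (X ^ a * (X - 1) ^ b)
      = (-1) ^ b * a.factorial * b.factorial / (a + b + 1).factorial := by
  induction b with
  | zero =>
    intro a
    rw [pow_zero, mul_one, JJ_X_pow]
    rw [Nat.factorial_succ]
    push_cast
    simp
    rw [mul_comm]
    rw [div_mul_eq_div_div]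
    congr 1
    rw [div_self (by exact_mod_cast a.factorial_ne_zero)]
    rw [one_div]
  | succ b ih =>
    intro a
    have hX : (X ^ a : ℚ[X]) = C (((a:ℚ)+1))⁻¹ * derivative (X ^ (a+1)) := by
      rw [derivative_X_pow, Nat.add_sub_cancel, ← mul_assoc]
      push_cast
      rw [← C_mul, inv_mul_cancel₀ (by positivity), C_1, one_mul]
    rw [hX, mul_assoc, ← smul_eq_C_mul, _root_.map_smul, JJ_parts]
    have hd : derivative ((X - 1 : ℚ[X]) ^ (b+1)) = ((b:ℚ)+1) • (X - 1) ^ b := by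
      rw [derivative_pow]
      rw [smul_eq_C_mul]
      simp only [Nat.add_sub_cancel, derivative_sub, derivative_X, derivative_one, sub_zero,
        mul_one, _root_.map_add, _root_.map_natCast, _root_.map_one]
      push_cast
      ring
    rw [hd]
    have he1 : ((X:ℚ[X]) ^ (a+1) * (X - 1) ^ (b+1)).eval 1 = 0 := by simp
    have he0 : ((X:ℚ[X]) ^ (a+1) * (X - 1) ^ (b+1)).eval 0 = 0 := by
      simp [zero_pow (Nat.succ_ne_zero a)]
    rw [he1, he0]
    rw [show (X:ℚ[X]) ^ (a+1) * (((b:ℚ)+1) • (X - 1) ^ b)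
        = ((b:ℚ)+1) • (X ^ (a+1) * (X - 1) ^ b) by rw [smul_eq_C_mul, smul_eq_C_mul]; ring]
    rw [_root_.map_smul, ih (a+1)]
    have hfa : ((a+1).factorial : ℚ) = (a+1) * a.factorial := by
      rw [Nat.factorial_succ]; push_cast; ring
    have hfb : ((b+1).factorial : ℚ) = (b+1) * b.factorial := by
      rw [Nat.factorial_succ]; push_cast; ring
    have hee : a + 1 + b + 1 = a + (b+1) + 1 := by omega
    rw [smul_eq_mul, smul_eq_mul, hfa, hfb, hee]
    have h0 : ((a:ℚ)+1) ≠ 0 := by positivity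
    have h4 : ((a+(b+1)+1).factorial : ℚ) ≠ 0 := by exact_mod_cast Nat.factorial_ne_zero _
    field_simp
    ring

lemma JJ_ff (k : ℕ) :
    JJ (ff k) = (-1) ^ k * k.factorial * k.factorial / (2 * k + 1).factorial := by
  have := JJ_X_pow_mul k k
  rw [ff, this, show k + k + 1 = 2 * k + 1 by ring]

lemma deriv_two_mul_ff (k : ℕ) :
    derivative^[2 * k] (ff k) = C (((2 * k).factorial : ℚ)) := by
  have hdeg : (derivative^[2 * k] (ff k)).natDegree = 0 := by
    have := natDegree_iterate_derivative (ff k) (2 * k)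
    rw [ff_natDegree] at this
    omega
  rw [eq_C_of_natDegree_le_zero (le_of_eq hdeg)]
  rw [coeff_iterate_derivative, zero_add]
  have hc : (ff k).coeff (2 * k) = 1 := by
    have := (ff_monic k).leadingCoeff
    rwa [leadingCoeff, ff_natDegree] at this
  rw [hc, Nat.descFactorial_self]
  simp

lemma natDegree_QQ (k : ℕ) : (QQ k).natDegree ≤ k := by
  have := natDegree_iterate_derivative (ff k) k
  rw [ff_natDegree] at this
  rw [QQ]
  omega

lemma JJ_QQ_low {k : ℕ} (q : ℚ[X]) (hq : q.natDegree < k) : JJ (QQ k * q) = 0 := by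
  rw [QQ, JJ_iter_parts k (ff k) q (fun r hr => iter_deriv_ff_eval0 hr)
    (fun r hr => iter_deriv_ff_eval1 hr), iterate_derivative_eq_zero hq]
  simp

lemma JJ_QQ_mul_QQ {i j : ℕ} (hij : i ≠ j) : JJ (QQ i * QQ j) = 0 := by
  rcases Nat.lt_or_ge j i with h | h
  · exact JJ_QQ_low (QQ j) (lt_of_le_of_lt (natDegree_QQ j) h)
  · rw [mul_comm]
    exact JJ_QQ_low (QQ i) (lt_of_le_of_lt (natDegree_QQ i) (by omega))

lemma JJ_QQ_sq (k : ℕ) :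
    JJ (QQ k * QQ k) = (2 * k).factorial * (k.factorial * k.factorial)
      / (2 * k + 1).factorial := by
  nth_rewrite 1 [QQ]
  rw [JJ_iter_parts k (ff k) (QQ k) (fun r hr => iter_deriv_ff_eval0 hr)
    (fun r hr => iter_deriv_ff_eval1 hr)]
  rw [QQ, ← Function.iterate_add_apply, show k + k = 2 * k by ring, deriv_two_mul_ff]
  rw [show ff k * C (((2*k).factorial : ℚ)) = ((2*k).factorial : ℚ) • ff k by
    rw [smul_eq_C_mul]; ring]
  rw [_root_.map_smul, JJ_ff, smul_eq_mul]
  have hs : (-1:ℚ) ^ k * (-1:ℚ) ^ k = 1 := by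
    rw [← pow_add, ← two_mul, pow_mul]; norm_num
  rw [show ((-1:ℚ))^k * (((2*k).factorial:ℚ) * ((-1:ℚ)^k * k.factorial * k.factorial
      / (2*k+1).factorial)) = ((-1:ℚ)^k*(-1:ℚ)^k) * ((2*k).factorial
      * ((k.factorial:ℚ) * k.factorial) / (2*k+1).factorial) by ring, hs, one_mul]

lemma coeff_QQ_zero {k a : ℕ} (h : k < a) : (QQ k).coeff a = 0 :=
  coeff_eq_zero_of_natDegree_lt (lt_of_le_of_lt (natDegree_QQ k) h)

lemma coeff_QQ_self (k : ℕ) : (QQ k).coeff k = ((2 * k).descFactorial k : ℚ) := by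
  rw [QQ, coeff_iterate_derivative]
  have hc : (ff k).coeff (k + k) = 1 := by
    have := (ff_monic k).leadingCoeff
    rwa [leadingCoeff, ff_natDegree, two_mul] at this
  rw [hc, ← two_mul]
  simp


lemma coeff_bernoulli (n a : ℕ) :
    (Polynomial.bernoulli n).coeff a
      = if a ≤ n then _root_.bernoulli (n - a) * n.choose a else 0 := by
  rw [Polynomial.bernoulli_def, finset_sum_coeff]
  simp only [coeff_monomial]
  rw [Finset.sum_ite_eq' (range (n+1)) a]
  simp [Nat.lt_succ_iff]

lemma coeff_bernoulli_self (n : ℕ) : (Polynomial.bernoulli n).coeff n = 1 := by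
  rw [_root_.coeff_bernoulli, if_pos le_rfl, Nat.sub_self, _root_.bernoulli_zero, Nat.choose_self]
  norm_num

lemma coeff_bernoulli_zero_of_lt {n a : ℕ} (h : n < a) :
    (Polynomial.bernoulli n).coeff a = 0 := by
  rw [_root_.coeff_bernoulli, if_neg (by omega)]

lemma natDegree_bernoulli_le (n : ℕ) : (Polynomial.bernoulli n).natDegree ≤ n :=
  natDegree_le_iff_coeff_eq_zero.2 fun _ h => coeff_bernoulli_zero_of_lt h

lemma JJ_mul_expand (N : ℕ) (f g : ℚ[X]) (hf : f.natDegree < N) (hg : g.natDegree < N) :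
    JJ (f * g) = ∑ a ∈ range N, ∑ b ∈ range N,
      f.coeff a * g.coeff b * ((a : ℚ) + b + 1)⁻¹ := by
  conv_lhs => rw [as_sum_range' f N hf, as_sum_range' g N hg]
  rw [Finset.sum_mul_sum, _root_.map_sum]
  refine Finset.sum_congr rfl fun a _ => ?_
  rw [_root_.map_sum]
  refine Finset.sum_congr rfl fun b _ => ?_
  rw [monomial_mul_monomial, JJ_monomial]
  push_cast
  rw [div_eq_mul_inv]

noncomputable def Hmat (n : ℕ) : Matrix (Fin (n+1)) (Fin (n+1)) ℚ :=
  Matrix.of fun a b => (((a : ℕ) : ℚ) + ((b : ℕ) : ℚ) + 1)⁻¹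

lemma mulHmul_apply (n : ℕ) (B : Matrix (Fin (n+1)) (Fin (n+1)) ℚ)
    (p : ℕ → ℚ[X]) (hB : ∀ i a : Fin (n+1), B i a = (p (i : ℕ)).coeff a)
    (hdeg : ∀ i : Fin (n+1), (p (i:ℕ)).natDegree < n + 1) (i j : Fin (n+1)) :
    (B * Hmat n * Bᵀ) i j = JJ (p (i : ℕ) * p (j : ℕ)) := by
  rw [JJ_mul_expand (n+1) _ _ (hdeg i) (hdeg j)]
  rw [← Fin.sum_univ_eq_sum_range]
  have : ∀ a : Fin (n+1), ∑ b ∈ range (n+1),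
      (p (i:ℕ)).coeff a * (p (j:ℕ)).coeff b * (((a:ℕ):ℚ) + b + 1)⁻¹
      = ∑ b : Fin (n+1),
      (p (i:ℕ)).coeff a * (p (j:ℕ)).coeff b * (((a:ℕ):ℚ) + ((b:ℕ):ℚ) + 1)⁻¹ := by
    intro a
    rw [← Fin.sum_univ_eq_sum_range]
  simp only [this]
  rw [Finset.sum_comm]
  simp only [Matrix.mul_apply, Matrix.transpose_apply, Finset.sum_mul]
  refine Finset.sum_congr rfl fun b _ => Finset.sum_congr rfl fun a _ => ?_
  rw [hB i a, hB j b]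
  simp only [Hmat, Matrix.of_apply]
  ring

noncomputable def Amat (n : ℕ) : Matrix (Fin (n+1)) (Fin (n+1)) ℚ :=
  Matrix.of fun i a => (Polynomial.bernoulli (i : ℕ)).coeff a

noncomputable def Pmat (n : ℕ) : Matrix (Fin (n+1)) (Fin (n+1)) ℚ :=
  Matrix.of fun k a => (QQ (k : ℕ)).coeff a

lemma det_Amat (n : ℕ) : (Amat n).det = 1 := by
  rw [Matrix.det_of_lowerTriangular (Amat n) (fun i j h => ?_)]
  · exact Finset.prod_eq_one fun i _ => coeff_bernoulli_self _
  · exact coeff_bernoulli_zero_of_lt (by exact_mod_cast h)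

lemma det_Pmat (n : ℕ) :
    (Pmat n).det = ∏ k : Fin (n+1), ((2 * (k:ℕ)).descFactorial (k:ℕ) : ℚ) := by
  rw [Matrix.det_of_lowerTriangular (Pmat n) (fun i j h => ?_)]
  · exact Finset.prod_congr rfl fun i _ => coeff_QQ_self _
  · exact coeff_QQ_zero (by exact_mod_cast h)

lemma PHP_diag (n : ℕ) :
    Pmat n * Hmat n * (Pmat n)ᵀ
      = Matrix.diagonal (fun k : Fin (n+1) => JJ (QQ (k:ℕ) * QQ (k:ℕ))) := by
  ext i j
  rw [mulHmul_apply n (Pmat n) QQ (fun _ _ => rfl)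
    (fun i => lt_of_le_of_lt (natDegree_QQ _) (Nat.lt_succ_of_le (Fin.is_le i))) i j]
  by_cases h : i = j
  · subst h; rw [Matrix.diagonal_apply_eq]
  · rw [Matrix.diagonal_apply_ne _ h,
      JJ_QQ_mul_QQ (fun hc => h (Fin.ext hc))]


lemma AHA_apply (n : ℕ) (i j : Fin (n+1)) :
    (Amat n * Hmat n * (Amat n)ᵀ) i j
      = JJ (Polynomial.bernoulli (i:ℕ) * Polynomial.bernoulli (j:ℕ)) :=
  mulHmul_apply n (Amat n) Polynomial.bernoulli (fun _ _ => rfl)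
    (fun i => lt_of_le_of_lt (natDegree_bernoulli_le _) (Nat.lt_succ_of_le (Fin.is_le i))) i j

lemma det_Hmat_eq (n : ℕ) :
    (Hmat n).det = (Amat n * Hmat n * (Amat n)ᵀ).det := by
  rw [Matrix.det_mul, Matrix.det_mul, Matrix.det_transpose, det_Amat]
  ring

lemma det_PHP (n : ℕ) :
    (Pmat n).det ^ 2 * (Hmat n).det
      = ∏ k : Fin (n+1), ((2 * (k:ℕ)).factorial * ((k:ℕ).factorial * (k:ℕ).factorial)
          / (2 * (k:ℕ) + 1).factorial : ℚ) := by
  have h := congrArg Matrix.det (PHP_diag n)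
  rw [Matrix.det_mul, Matrix.det_mul, Matrix.det_transpose, Matrix.det_diagonal] at h
  rw [show (Pmat n).det ^ 2 * (Hmat n).det
    = (Pmat n).det * (Hmat n).det * (Pmat n).det by ring, h]
  exact Finset.prod_congr rfl fun k _ => JJ_QQ_sq _

lemma det_AHA_expand (n : ℕ) :
    (Amat n * Hmat n * (Amat n)ᵀ).det
      = ((Amat n * Hmat n * (Amat n)ᵀ).submatrix Fin.succ Fin.succ).det := by
  rw [Matrix.det_succ_row_zero]
  rw [Finset.sum_eq_single 0]
  · rw [AHA_apply]
    simp only [Fin.val_zero, Polynomial.bernoulli_zero, one_mul, pow_zero]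
    have h1 : JJ (1 : ℚ[X]) = 1 := by
      have := JJ_X_pow 0
      rwa [pow_zero, Nat.cast_zero, zero_add, div_one] at this
    rw [h1, one_mul, Fin.succAbove_zero]
  · intro j _ hj
    rw [AHA_apply]
    simp only [Fin.val_zero, Polynomial.bernoulli_zero, one_mul]
    have hjv : (j:ℕ) ≠ 0 := fun hc => hj (Fin.ext hc)
    rw [JJ_bernoulli (by omega : 1 ≤ (j:ℕ))]
    · ring
  · intro h; exact absurd (Finset.mem_univ 0) h


lemma desc_cast (n : ℕ) :
    (((2*(n+1)).descFactorial (n+1) : ℕ) : ℚ) = 2^(n+1) * ((2*n+1)‼ : ℚ) := by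
  have h1 : (n+1).factorial * (2*(n+1)).descFactorial (n+1) = (2*(n+1)).factorial := by
    have := Nat.factorial_mul_descFactorial (show n+1 ≤ 2*(n+1) by omega)
    rwa [show 2*(n+1) - (n+1) = n+1 by omega] at this
  have h2 : (2*(n+1)).factorial = 2^(n+1) * (n+1).factorial * (2*n+1)‼ := by
    have ha : (2*n+1+1).factorial = (2*n+1+1)‼ * (2*n+1)‼ :=
      Nat.factorial_eq_mul_doubleFactorial (2*n+1)
    have hb : (2*(n+1))‼ = 2^(n+1) * (n+1).factorial := Nat.doubleFactorial_two_mul (n+1)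
    rw [show 2*(n+1) = 2*n+1+1 by ring, ha, show 2*n+1+1 = 2*(n+1) by ring, hb]
  have h3 : (n+1).factorial * (2*(n+1)).descFactorial (n+1)
      = (n+1).factorial * (2^(n+1) * (2*n+1)‼) := by
    rw [h1, h2]; ring
  have h4 := Nat.eq_of_mul_eq_mul_left (Nat.factorial_pos (n+1)) h3
  rw [h4]; push_cast; ring

lemma qkey (n : ℕ) :
    (∏ k ∈ range (n+1), (((2*k).factorial : ℚ) * ((k.factorial : ℚ) * (k.factorial : ℚ))
        / ((2*k+1).factorial : ℚ)))
      * 2^(n*(n+1)) * (∏ m ∈ Icc 1 n, ((2*m+1)‼ : ℚ))^2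
    = (∏ k ∈ range (n+1), (((2*k).descFactorial k : ℕ) : ℚ))^2
        * (∏ i ∈ range n, ((i+1).factorial : ℚ))^2 * ((2*n+1)‼ : ℚ) := by
  induction n with
  | zero => norm_num
  | succ n ih =>
    rw [prod_range_succ (fun k => (((2*k).factorial : ℚ) * ((k.factorial:ℚ) * (k.factorial:ℚ))
        / ((2*k+1).factorial : ℚ))) (n+1),
      prod_range_succ (fun k => (((2*k).descFactorial k : ℕ) : ℚ)) (n+1),
      prod_range_succ (fun i => (((i+1).factorial : ℚ))) n,
      Finset.prod_Icc_succ_top (Nat.succ_le_succ (Nat.zero_le n)),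
      show (n+1)*(n+1+1) = n*(n+1) + 2*(n+1) by ring, pow_add]
    have hfac3 : ((2*(n+1)+1).factorial : ℚ) = (2*n+3) * ((2*(n+1)).factorial : ℚ) := by
      rw [show 2*(n+1)+1 = (2*(n+1)) + 1 by ring, Nat.factorial_succ]
      push_cast; ring
    have hfac2 : ((2*(n+1)).factorial : ℚ) = 2^(n+1) * ((n+1).factorial : ℚ) * ((2*n+1)‼ : ℚ) := by
      have ha : (2*n+1+1).factorial = (2*n+1+1)‼ * (2*n+1)‼ :=
        Nat.factorial_eq_mul_doubleFactorial (2*n+1)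
      have hb : (2*(n+1))‼ = 2^(n+1) * (n+1).factorial := Nat.doubleFactorial_two_mul (n+1)
      rw [show 2*(n+1) = 2*n+1+1 by ring, ha, show 2*n+1+1 = 2*(n+1) by ring, hb]
      push_cast; ring
    have hdd : ((2*(n+1)+1)‼ : ℚ) = (2*n+3) * ((2*n+1)‼ : ℚ) := by
      rw [show 2*(n+1)+1 = 2*n+1+2 by ring, Nat.doubleFactorial_add_two]
      push_cast; ring
    have hfne : ∀ m : ℕ, ((m.factorial : ℚ)) ≠ 0 :=
      fun m => Nat.cast_ne_zero.2 (Nat.factorial_ne_zero m)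
    calc (∏ k ∈ range (n+1), (((2*k).factorial : ℚ) * ((k.factorial : ℚ) * (k.factorial : ℚ))
            / ((2*k+1).factorial : ℚ)))
          * (((2*(n+1)).factorial : ℚ) * (((n+1).factorial : ℚ) * ((n+1).factorial : ℚ))
            / ((2*(n+1)+1).factorial : ℚ))
          * (2^(n*(n+1)) * 2^(2*(n+1)))
          * ((∏ m ∈ Icc 1 n, ((2*m+1)‼ : ℚ)) * ((2*(n+1)+1)‼ : ℚ))^2
        = ((∏ k ∈ range (n+1), (((2*k).factorial : ℚ) * ((k.factorial : ℚ) * (k.factorial : ℚ))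
            / ((2*k+1).factorial : ℚ))) * 2^(n*(n+1)) * (∏ m ∈ Icc 1 n, ((2*m+1)‼ : ℚ))^2)
          * ((((2*(n+1)).factorial : ℚ) * (((n+1).factorial : ℚ) * ((n+1).factorial : ℚ))
            / ((2*(n+1)+1).factorial : ℚ)) * 2^(2*(n+1)) * ((2*(n+1)+1)‼ : ℚ)^2) := by
          ring
      _ = ((∏ k ∈ range (n+1), (((2*k).descFactorial k : ℕ) : ℚ))^2
            * (∏ i ∈ range n, ((i+1).factorial : ℚ))^2 * ((2*n+1)‼ : ℚ))
          * ((((2*(n+1)).descFactorial (n+1) : ℕ) : ℚ)^2 * ((n+1).factorial : ℚ)^2 * (2*n+3)) := by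
          rw [ih]
          congr 1
          rw [desc_cast, hfac3, hfac2, hdd]
          field_simp
          ring
      _ = _ := by rw [hdd]; ring

theorem stmt_4_aux (n : ℕ) :
    (Matrix.of fun i j : Fin n =>
        _root_.bernoulli (((i : ℕ) + 1) + ((j : ℕ) + 1)) /
          (Nat.factorial (((i : ℕ) + 1) + ((j : ℕ) + 1)) : ℚ)).det
      = (-1 : ℚ) ^ (n * (n - 1) / 2) * (Nat.doubleFactorial (2 * n + 1) : ℚ) /
          ((2 : ℚ) ^ (n * (n + 1)) *
            (∏ m ∈ Finset.Icc 1 n, (Nat.doubleFactorial (2 * m + 1) : ℚ)) ^ 2) := by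
  classical
  set M : Matrix (Fin n) (Fin n) ℚ := Matrix.of fun i j : Fin n =>
      _root_.bernoulli (((i : ℕ) + 1) + ((j : ℕ) + 1)) /
        (Nat.factorial (((i : ℕ) + 1) + ((j : ℕ) + 1)) : ℚ) with hMdef
  have hsub : (Amat n * Hmat n * (Amat n)ᵀ).submatrix Fin.succ Fin.succ
      = Matrix.diagonal (fun i : Fin n => (((i:ℕ)+1).factorial : ℚ)) * M *
        Matrix.diagonal (fun j : Fin n => (-1:ℚ)^(j:ℕ) * (((j:ℕ)+1).factorial : ℚ)) := by
    ext i j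
    rw [Matrix.submatrix_apply, AHA_apply, Fin.val_succ, Fin.val_succ,
      gram ((j:ℕ)+1) (by omega) ((i:ℕ)+1) (by omega), Matrix.mul_diagonal,
      Matrix.diagonal_mul, hMdef, Matrix.of_apply, Nat.add_sub_cancel]
    ring
  have E1 : (Hmat n).det
      = (∏ i : Fin n, (((i:ℕ)+1).factorial : ℚ)) * M.det
        * (∏ j : Fin n, ((-1:ℚ)^(j:ℕ) * (((j:ℕ)+1).factorial : ℚ))) := by
    rw [det_Hmat_eq, det_AHA_expand, hsub, Matrix.det_mul, Matrix.det_mul,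
      Matrix.det_diagonal, Matrix.det_diagonal]
  have E0 := det_PHP n
  rw [E1, det_Pmat] at E0
  rw [Fin.prod_univ_eq_prod_range (fun k => (((2*k).descFactorial k : ℕ) : ℚ)) (n+1),
    Fin.prod_univ_eq_prod_range (fun i => (((i+1).factorial : ℚ))) n,
    Fin.prod_univ_eq_prod_range
      (fun j => ((-1:ℚ)^j * (((j+1).factorial : ℚ)))) n,
    Fin.prod_univ_eq_prod_range
      (fun k => (((2*k).factorial : ℚ) * (((k).factorial : ℚ) * ((k).factorial : ℚ))
        / ((2*k+1).factorial : ℚ))) (n+1)] at E0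
  set D : ℚ := ∏ k ∈ Finset.range (n+1), (((2*k).descFactorial k : ℕ) : ℚ) with hDdef
  set F1 : ℚ := ∏ i ∈ Finset.range n, (((i+1).factorial : ℚ)) with hF1def
  set PI : ℚ := ∏ m ∈ Finset.Icc 1 n, ((2*m+1)‼ : ℚ) with hPIdef
  have hF2 : (∏ j ∈ Finset.range n, ((-1:ℚ)^j * (((j+1).factorial : ℚ))))
      = (-1:ℚ)^(n*(n-1)/2) * F1 := by
    rw [Finset.prod_mul_distrib, Finset.prod_pow_eq_pow_sum, Finset.sum_range_id]
  rw [hF2] at E0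
  have key := qkey n
  rw [← hDdef, ← hF1def, ← hPIdef] at key
  -- nonvanishing
  have hDne : D ≠ 0 := by
    rw [hDdef]
    refine Finset.prod_ne_zero_iff.2 fun k _ => ?_
    have hk := Nat.factorial_mul_descFactorial (show k ≤ 2*k by omega)
    intro hc
    rw [Nat.cast_eq_zero] at hc
    rw [hc, Nat.mul_zero] at hk
    exact (Nat.factorial_ne_zero (2*k)) hk.symm
  have hF1ne : F1 ≠ 0 := by
    rw [hF1def]
    exact Finset.prod_ne_zero_iff.2 fun i _ =>
      Nat.cast_ne_zero.2 (Nat.factorial_ne_zero (i+1))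
  have hPIne : PI ≠ 0 := by
    rw [hPIdef]
    exact Finset.prod_ne_zero_iff.2 fun m _ =>
      Nat.cast_ne_zero.2 (Nat.doubleFactorial_pos _).ne'
  have h2ne : ((2:ℚ)^(n*(n+1))) ≠ 0 := by positivity
  have hsq : (-1:ℚ)^(n*(n-1)/2) * (-1:ℚ)^(n*(n-1)/2) = 1 := by
    rw [← pow_add, ← two_mul, pow_mul]
    norm_num
  rw [eq_div_iff (by exact mul_ne_zero h2ne (pow_ne_zero 2 hPIne))]
  apply mul_right_cancel₀ (mul_ne_zero (pow_ne_zero 2 hDne) (pow_ne_zero 2 hF1ne))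
  calc M.det * ((2:ℚ)^(n*(n+1)) * PI^2) * (D^2 * F1^2)
      = ((-1:ℚ)^(n*(n-1)/2) * (-1:ℚ)^(n*(n-1)/2)) * M.det
        * ((2:ℚ)^(n*(n+1)) * PI^2) * (D^2 * F1^2) := by rw [hsq]; ring
    _ = (-1:ℚ)^(n*(n-1)/2)
        * ((D^2 * (F1 * M.det * ((-1:ℚ)^(n*(n-1)/2) * F1))) * 2^(n*(n+1)) * PI^2) := by
        ring
    _ = (-1:ℚ)^(n*(n-1)/2)
        * ((∏ k ∈ Finset.range (n+1), (((2*k).factorial : ℚ)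
            * (((k).factorial : ℚ) * ((k).factorial : ℚ)) / ((2*k+1).factorial : ℚ)))
          * 2^(n*(n+1)) * PI^2) := by rw [E0]
    _ = (-1:ℚ)^(n*(n-1)/2) * (D^2 * F1^2 * ((2*n+1)‼ : ℚ)) := by rw [key]
    _ = (-1:ℚ)^(n*(n-1)/2) * ((2*n+1)‼ : ℚ) * (D^2 * F1^2) := by ring


end Aux

open Finset

theorem stmt_4 (n : ℕ) (hn : 1 ≤ n) :
    (Matrix.of fun i j : Fin n =>
        bernoulli (((i : ℕ) + 1) + ((j : ℕ) + 1)) /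
          (Nat.factorial (((i : ℕ) + 1) + ((j : ℕ) + 1)) : ℚ)).det
      = (-1 : ℚ) ^ (n * (n - 1) / 2) * (Nat.doubleFactorial (2 * n + 1) : ℚ) /
          ((2 : ℚ) ^ (n * (n + 1)) *
            (∏ m ∈ Finset.Icc 1 n, (Nat.doubleFactorial (2 * m + 1) : ℚ)) ^ 2) :=
  stmt_4_aux n
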